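/- For each fixed τ ∈ (1/e, 2]: the function ψ_τ is strictly increasing on [0, ∞) and tends to +∞, and if τ ∈ (1/e, 1] then ψ_τ(τ) < 1. The function Θ(t) := ∫_0^t x_τ(ϱ(τ) + w - τ) dw - x_τ(ϱ(τ) + t - τ) is continuous and strictly increasing on [0, τ] with Θ(0)·Θ(τ) < 0, and hence has a unique root ξ_τ ∈ (0, τ), which satisfies ∫_0^{ξ_τ} x_τ(ϱ(τ) + w - τ) dw = x_τ(ϱ(τ) + ξ_τ - τ); moreover ψ_τ(t) = ∫_0^t x_τ(ϱ(τ) + w - τ) dw for t ∈ [0, ξ_τ] and ψ_τ(t) = ψ_τ(ξ_τ)·exp(t - ξ_τ) for t ≥ ξ_τ. -/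

import Mathlib

open Real MeasureTheory Filter Set

noncomputable section

/-- `x` is the solution of `x'(t) = -x(t-τ)` with `x ≡ 1` on `(-∞,0]`:
`x(t) = 1 - ∫_0^t x(s-τ) ds` for `t ≥ 0`. -/
def IsXSol (τ : ℝ) (x : ℝ → ℝ) : Prop :=
  Continuous x ∧ (∀ t ≤ (0:ℝ), x t = 1) ∧
    ∀ t ≥ (0:ℝ), x t = 1 - ∫ s in (0:ℝ)..t, x (s - τ)

/-- The first positive root of a function. -/
noncomputable def firstRoot (x : ℝ → ℝ) : ℝ := sInf {t : ℝ | 0 < t ∧ x t = 0}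

/-- `ψ` is the solution of `ψ'(t) = max{x_τ(ϱ(τ)+t-τ), ψ(t)}` on `[0,τ]`,
`ψ'(t) = ψ(t)` on `[τ,∞)`, `ψ(0) = 0`. -/
def IsPsiSol (τ ρ : ℝ) (xτ ψ : ℝ → ℝ) : Prop :=
  ContinuousOn ψ (Ici (0:ℝ)) ∧ ψ 0 = 0 ∧
    (∀ t ∈ Icc (0:ℝ) τ, ψ t = ∫ s in (0:ℝ)..t, max (xτ (ρ + s - τ)) (ψ s)) ∧
    (∀ t ≥ τ, ψ t = ψ τ + ∫ s in τ..t, ψ s)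

/-- A (continuous, integrated-form) solution of the delay equation
`x'(t) = p(t) x(τ̄(t))` on `[t₀,∞)`. -/
def IsDelaySolution (p τd : ℝ → ℝ) (t₀ : ℝ) (x : ℝ → ℝ) : Prop :=
  Continuous x ∧ ∀ t ≥ t₀, x t = x t₀ + ∫ s in t₀..t, p s * x (τd s)

/-- `x` is `α`-oscillating: eventually every interval on which `x` has no zero
has length at most `α`. -/
def AlphaOscillating (α : ℝ) (x : ℝ → ℝ) : Prop :=
  ∃ T : ℝ, ∀ a b : ℝ, T ≤ a → a < b → (∀ t ∈ Ioo a b, x t ≠ 0) → b - a ≤ α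

/-- `x` is oscillatory: it has arbitrarily large zeros. -/
def Oscillatory (x : ℝ → ℝ) : Prop := ∀ T : ℝ, ∃ t ≥ T, x t = 0



namespace S5

open intervalIntegral

lemma hasDerivAt_primitive {f : ℝ → ℝ} (hf : Continuous f) (a t : ℝ) :
    HasDerivAt (fun u => ∫ s in a..u, f s) (f t) t :=
  intervalIntegral.integral_hasDerivAt_right (hf.intervalIntegrable _ _)
    (hf.stronglyMeasurableAtFilter _ _) hf.continuousAt

variable {τ : ℝ} {x : ℝ → ℝ}

lemma xdiff (hx : IsXSol τ x) {s t : ℝ} (hs : 0 ≤ s) (hst : s ≤ t) :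
    x t = x s - ∫ u in s..t, x (u - τ) := by
  have hc : Continuous fun u : ℝ => x (u - τ) := hx.1.comp (by continuity)
  have h1 := hx.2.2 s hs
  have h2 := hx.2.2 t (hs.trans hst)
  have hadd := intervalIntegral.integral_add_adjacent_intervals
    (a := (0:ℝ)) (b := s) (c := t) (f := fun u => x (u - τ)) (μ := volume)
    (hc.intervalIntegrable _ _) (hc.intervalIntegrable _ _)
  rw [h1, h2, ← hadd]; ring

lemma x_hasDerivAt (hx : IsXSol τ x) {t : ℝ} (ht : 0 < t) :
    HasDerivAt x (-(x (t - τ))) t := by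
  have hc : Continuous fun u : ℝ => x (u - τ) := hx.1.comp (by continuity)
  have hF : HasDerivAt (fun u => (1:ℝ) - ∫ s in (0:ℝ)..u, x (s - τ)) (-(x (t - τ))) t := by
    simpa using (hasDerivAt_primitive hc 0 t).const_sub 1
  refine hF.congr_of_eventuallyEq ?_
  filter_upwards [eventually_gt_nhds ht] with u hu
  exact hx.2.2 u hu.le

lemma exists_root (hx : IsXSol τ x) (hτ1 : 1 / Real.exp 1 < τ) :
    ∃ t, 0 < t ∧ x t = 0 := by
  have hτ0 : 0 < τ := lt_trans (by positivity) hτ1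
  have hc : Continuous fun u : ℝ => x (u - τ) := hx.1.comp (by continuity)
  by_cases hone : 1 ≤ τ
  · refine ⟨1, one_pos, ?_⟩
    have hcg : ∀ s ∈ uIcc (0:ℝ) 1, x (s - τ) = (fun _ : ℝ => (1:ℝ)) s := by
      intro s hs
      rw [uIcc_of_le zero_le_one] at hs
      exact hx.2.1 _ (by linarith [hs.1, hs.2])
    rw [hx.2.2 1 zero_le_one, intervalIntegral.integral_congr hcg]
    simp
  · by_contra hcon
    push_neg at hcon
    have hne : ∀ t, 0 < t → x t ≠ 0 := fun t ht h0 => hcon t ht h0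
    -- positivity of x
    have hpos : ∀ t, 0 < x t := by
      intro t
      rcases le_or_gt t 0 with h0 | h0
      · rw [hx.2.1 t h0]; norm_num
      · by_contra hle
        push_neg at hle
        have hlt : x t < 0 := lt_of_le_of_ne hle (hne t h0)
        have h01 : x 0 = 1 := hx.2.1 0 le_rfl
        have := intermediate_value_Ioo' (le_of_lt h0) (hx.1.continuousOn (s := Icc 0 t))
        have h0mem : (0:ℝ) ∈ Ioo (x t) (x 0) := by rw [h01]; exact ⟨hlt, one_pos⟩
        obtain ⟨z, hz, hxz⟩ := this h0mem
        exact hne z hz.1 hxz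
    -- x is nonincreasing
    have hanti : ∀ s t : ℝ, s ≤ t → x t ≤ x s := by
      intro s t hst
      rcases le_or_gt t 0 with h0 | h0
      · rw [hx.2.1 t h0, hx.2.1 s (hst.trans h0)]
      · rcases le_or_gt s 0 with h1 | h1
        · rw [hx.2.1 s h1, hx.2.2 t h0.le]
          have : 0 ≤ ∫ u in (0:ℝ)..t, x (u - τ) :=
            intervalIntegral.integral_nonneg h0.le (fun u _ => (hpos _).le)
          linarith
        · have := xdiff hx h1.le hst
          have hnn : 0 ≤ ∫ u in s..t, x (u - τ) :=
            intervalIntegral.integral_nonneg hst (fun u _ => (hpos _).le)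
          linarith
    -- exponential decay lemma
    have decay : ∀ L : ℝ, 0 ≤ L → ∀ a : ℝ, 0 ≤ a → (∀ u, a ≤ u → L * x u ≤ x (u - τ)) →
        ∀ s t : ℝ, a ≤ s → s ≤ t → x t * Real.exp (L * t) ≤ x s * Real.exp (L * s) := by
      intro L hL a ha hrate s t has hst
      have hd : ∀ u ∈ Ioo s t,
          HasDerivAt (fun u => x u * Real.exp (L * u))
            (-(x (u - τ)) * Real.exp (L * u) + x u * (Real.exp (L * u) * L)) u := by
        intro u hu
        have hu0 : 0 < u := lt_of_le_of_lt (ha.trans has) hu.1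
        exact (x_hasDerivAt hx hu0).mul (((hasDerivAt_id u).const_mul L).exp.congr_deriv (by simp))
      have hmono : AntitoneOn (fun u => x u * Real.exp (L * u)) (Icc s t) := by
        apply antitoneOn_of_deriv_nonpos (convex_Icc s t)
        · exact (hx.1.mul (Real.continuous_exp.comp (continuous_const.mul continuous_id))).continuousOn
        · intro u hu
          rw [interior_Icc] at hu
          exact (hd u hu).differentiableAt.differentiableWithinAt
        · intro u hu
          rw [interior_Icc] at hu
          rw [(hd u hu).deriv]
          have hr := hrate u (has.trans hu.1.le)
          nlinarith [Real.exp_pos (L * u)]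
      exact hmono (left_mem_Icc.mpr hst) (right_mem_Icc.mpr hst) hst
    -- bootstrap step
    have step : ∀ L : ℝ, 0 ≤ L → ∀ a : ℝ, 0 ≤ a → (∀ u, a ≤ u → L * x u ≤ x (u - τ)) →
        ∀ u, a + τ ≤ u → Real.exp (L * τ) * x u ≤ x (u - τ) := by
      intro L hL a ha hrate u hu
      have h1 := decay L hL a ha hrate (u - τ) u (by linarith) (by linarith)
      have h2 : Real.exp (L * (u - τ)) * Real.exp (L * τ) = Real.exp (L * u) := by
        rw [← Real.exp_add]; ring_nf
      have h3 := mul_le_mul_of_nonneg_right h1 (Real.exp_nonneg (-(L * u)))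
      have h4 : Real.exp (L * u) * Real.exp (-(L * u)) = 1 := by
        rw [← Real.exp_add]; simp
      have h5 : Real.exp (L * (u - τ)) * Real.exp (-(L * u)) = Real.exp (-(L * τ)) := by
        rw [← Real.exp_add]; ring_nf
      have h6 : Real.exp (L * τ) * Real.exp (-(L * τ)) = 1 := by
        rw [← Real.exp_add]; simp
      calc Real.exp (L * τ) * x u
          = Real.exp (L * τ) * (x u * Real.exp (L * u) * Real.exp (-(L * u))) := by
            rw [mul_assoc (x u), h4]; ring
        _ ≤ Real.exp (L * τ) * (x (u - τ) * Real.exp (L * (u - τ)) * Real.exp (-(L * u))) := by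
            have := mul_le_mul_of_nonneg_left h3 (Real.exp_nonneg (L * τ)); linarith
        _ = x (u - τ) * (Real.exp (L * τ) * Real.exp (-(L * τ))) := by
            rw [mul_assoc (x (u - τ)), h5]; ring
        _ = x (u - τ) := by rw [h6, mul_one]
    -- the sequence of rates
    set Λ : ℕ → ℝ := fun n => Nat.rec (motive := fun _ => ℝ) 1 (fun _ L => Real.exp (L * τ)) n
      with hΛdef
    have hΛ0 : Λ 0 = 1 := rfl
    have hΛs : ∀ n, Λ (n + 1) = Real.exp (Λ n * τ) := fun n => rfl
    have Hmain : ∀ n : ℕ, 1 ≤ Λ n ∧ ∀ u : ℝ, (n : ℝ) * τ ≤ u → Λ n * x u ≤ x (u - τ) := by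
      intro n
      induction n with
      | zero =>
        refine ⟨le_refl _, fun u _ => ?_⟩
        rw [hΛ0, one_mul]
        exact hanti (u - τ) u (by linarith)
      | succ n ih =>
        have h1 : 1 ≤ Λ (n + 1) := by
          rw [hΛs]
          have := Real.add_one_le_exp (Λ n * τ)
          nlinarith [ih.1]
        refine ⟨h1, fun u hu => ?_⟩
        rw [hΛs]
        have hstep := step (Λ n) (by linarith [ih.1]) ((n : ℝ) * τ) (by positivity) ih.2 u ?_
        · exact hstep
        · push_cast at hu ⊢
          nlinarith
    have growth : ∀ n : ℕ, (Real.exp 1 * τ) ^ n ≤ Λ n := by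
      intro n
      induction n with
      | zero => simp [hΛ0]
      | succ n ih =>
        have e1 : (0:ℝ) < Real.exp 1 := Real.exp_pos 1
        calc (Real.exp 1 * τ) ^ (n + 1) = (Real.exp 1 * τ) ^ n * (Real.exp 1 * τ) := by ring
          _ ≤ Λ n * (Real.exp 1 * τ) := by
              apply mul_le_mul_of_nonneg_right ih (by positivity)
          _ = Real.exp 1 * ((Λ n * τ - 1) + 1) := by ring
          _ ≤ Real.exp 1 * Real.exp (Λ n * τ - 1) := by
              exact mul_le_mul_of_nonneg_left (Real.add_one_le_exp _) (Real.exp_nonneg 1)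
          _ = Real.exp (Λ n * τ) := by rw [← Real.exp_add]; ring_nf
          _ = Λ (n + 1) := (hΛs n).symm
    -- upper ratio bound
    have ub : ∀ t : ℝ, τ ≤ t → τ / 2 * x (t - τ) ≤ x (t - τ / 2) := by
      intro t ht
      have h0 : (0:ℝ) ≤ t - τ / 2 := by linarith
      have hxd := xdiff hx (s := t - τ / 2) (t := t) h0 (by linarith)
      have hint : τ / 2 * x (t - τ) ≤ ∫ u in (t - τ / 2)..t, x (u - τ) := by
        have hm : ∫ u in (t - τ / 2)..t, x (t - τ) ≤ ∫ u in (t - τ / 2)..t, x (u - τ) := by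
          apply intervalIntegral.integral_mono_on (by linarith)
            intervalIntegrable_const (hc.intervalIntegrable _ _)
          intro u hu
          exact hanti (u - τ) (t - τ) (by linarith [hu.2])
        have hconst : ∫ u in (t - τ / 2)..t, x (t - τ) = (τ / 2) * x (t - τ) := by
          rw [intervalIntegral.integral_const, smul_eq_mul]; ring_nf
        linarith
      linarith [hpos t]
    -- contradiction
    have hq : 1 < Real.exp 1 * τ := by
      have := (div_lt_iff₀ (Real.exp_pos 1)).mp hτ1
      linarith
    obtain ⟨n, hn⟩ := ((tendsto_pow_atTop_atTop_of_one_lt hq).eventually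
      (eventually_gt_atTop (4 / τ ^ 2))).exists
    set u : ℝ := (n : ℝ) * τ + τ with hudef
    have hΛu : Λ n * x u ≤ x (u - τ) := (Hmain n).2 u (by rw [hudef]; linarith)
    have h3 : τ / 2 * x (u - τ) ≤ x (u - τ / 2) := ub u
      (by rw [hudef]; nlinarith [(by positivity : (0:ℝ) ≤ (n:ℝ) * τ)])
    have h2 : τ / 2 * x (u - τ / 2) ≤ x u := by
      have := ub (u + τ / 2)
        (by rw [hudef]; nlinarith [(by positivity : (0:ℝ) ≤ (n:ℝ) * τ)])
      have e1 : u + τ / 2 - τ = u - τ / 2 := by ring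
      have e2 : u + τ / 2 - τ / 2 = u := by ring
      rwa [e1, e2] at this
    have hΛn : 4 / τ ^ 2 < Λ n := lt_of_lt_of_le hn (growth n)
    have h5 : 4 < Λ n * τ ^ 2 := (div_lt_iff₀ (by positivity : (0:ℝ) < τ ^ 2)).mp hΛn
    have h6 : 4 * x u < Λ n * τ ^ 2 * x u := by nlinarith [hpos u]
    have h7 : τ ^ 2 * x (u - τ) ≤ 4 * x u := by
      nlinarith [mul_le_mul_of_nonneg_left h3 (le_of_lt (by positivity : (0:ℝ) < τ / 2)), h2]
    have h8 : Λ n * τ ^ 2 * x u ≤ τ ^ 2 * x (u - τ) := by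
      nlinarith [mul_le_mul_of_nonneg_left hΛu (by positivity : (0:ℝ) ≤ τ ^ 2)]
    linarith


lemma rho_spec (hx : IsXSol τ x) (hτ1 : 1 / Real.exp 1 < τ) :
    0 < firstRoot x ∧ x (firstRoot x) = 0 ∧ (∀ t, t < firstRoot x → 0 < x t) ∧
      1 ≤ firstRoot x := by
  have hτ0 : 0 < τ := lt_trans (by positivity) hτ1
  have hc : Continuous fun u : ℝ => x (u - τ) := hx.1.comp (by continuity)
  obtain ⟨t0, ht0, hxt0⟩ := exists_root hx hτ1
  have hSne : Set.Nonempty {t : ℝ | 0 < t ∧ x t = 0} := ⟨t0, ht0, hxt0⟩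
  have hSbdd : BddBelow {t : ℝ | 0 < t ∧ x t = 0} := ⟨0, fun t ht => ht.1.le⟩
  set δ := min τ 1 with hδ
  have hδ0 : 0 < δ := lt_min hτ0 one_pos
  have hlin : ∀ t, 0 ≤ t → t ≤ τ → x t = 1 - t := by
    intro t h0 h1
    rw [hx.2.2 t h0]
    have heq : EqOn (fun s : ℝ => x (s - τ)) (fun _ => (1:ℝ)) (uIcc 0 t) := by
      intro s hs; rw [uIcc_of_le h0] at hs
      exact hx.2.1 _ (by linarith [hs.1, hs.2])
    rw [intervalIntegral.integral_congr heq]; simp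
  have hSδ : ∀ t ∈ {t : ℝ | 0 < t ∧ x t = 0}, δ ≤ t := by
    rintro t ⟨ht0', htx⟩
    by_contra hlt; push_neg at hlt
    have h1 : x t = 1 - t :=
      hlin t ht0'.le (le_of_lt (lt_of_lt_of_le hlt (min_le_left _ _)))
    have h2 : t < 1 := lt_of_lt_of_le hlt (min_le_right _ _)
    rw [h1] at htx; linarith
  have hSclosed : IsClosed {t : ℝ | 0 < t ∧ x t = 0} := by
    have hEq : {t : ℝ | 0 < t ∧ x t = 0} = Ici δ ∩ x ⁻¹' {0} := by
      ext t
      constructor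
      · intro ht; exact ⟨hSδ t ht, ht.2⟩
      · rintro ⟨h1, h2⟩; exact ⟨lt_of_lt_of_le hδ0 h1, h2⟩
    rw [hEq]
    exact isClosed_Ici.inter (isClosed_singleton.preimage hx.1)
  have hmem : firstRoot x ∈ {t : ℝ | 0 < t ∧ x t = 0} :=
    hSclosed.csInf_mem hSne hSbdd
  have hlb : ∀ t ∈ {t : ℝ | 0 < t ∧ x t = 0}, firstRoot x ≤ t :=
    fun t ht => csInf_le hSbdd ht
  have hpos : ∀ t, t < firstRoot x → 0 < x t := by
    intro t ht
    rcases le_or_gt t 0 with h0 | h0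
    · rw [hx.2.1 t h0]; norm_num
    · by_contra hle
      push_neg at hle
      rcases lt_or_eq_of_le hle with hlt | heq0
      · have h01 : x 0 = 1 := hx.2.1 0 le_rfl
        have him := intermediate_value_Ioo' (le_of_lt h0) (hx.1.continuousOn (s := Icc 0 t))
        have h0mem : (0:ℝ) ∈ Ioo (x t) (x 0) := by rw [h01]; exact ⟨hlt, one_pos⟩
        obtain ⟨z, hz, hxz⟩ := him h0mem
        have := hlb z ⟨hz.1, hxz⟩
        linarith [hz.2]
      · have := hlb t ⟨h0, heq0⟩
        linarith
  have h1le : 1 ≤ firstRoot x := by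
    have hle1 : ∀ u, u ≤ firstRoot x → x u ≤ 1 := by
      intro u hu
      rcases le_or_gt u 0 with h0 | h0
      · rw [hx.2.1 u h0]
      · rw [hx.2.2 u h0.le]
        have hnn : 0 ≤ ∫ s in (0:ℝ)..u, x (s - τ) := by
          apply intervalIntegral.integral_nonneg h0.le
          intro s hs
          have hsρ : s - τ < firstRoot x := by linarith [hs.2]
          exact (hpos _ hsρ).le
        linarith
    have hxρ := hx.2.2 (firstRoot x) hmem.1.le
    have hle : ∫ s in (0:ℝ)..firstRoot x, x (s - τ) ≤ ∫ s in (0:ℝ)..firstRoot x, (1:ℝ) := by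
      apply intervalIntegral.integral_mono_on hmem.1.le (hc.intervalIntegrable _ _)
        intervalIntegrable_const
      intro s hs
      exact hle1 (s - τ) (by linarith [hs.2])
    rw [hmem.2] at hxρ
    simp only [intervalIntegral.integral_const, smul_eq_mul, sub_zero, mul_one] at hle
    linarith
  exact ⟨hmem.1, hmem.2, hpos, h1le⟩


end S5

theorem stmt5 (τ : ℝ) (hτ : τ ∈ Ioc (1 / Real.exp 1) 2)
    (xτ : ℝ → ℝ) (hx : IsXSol τ xτ) (ρ : ℝ) (hρ : ρ = firstRoot xτ)
    (ψ : ℝ → ℝ) (hψ : IsPsiSol τ ρ xτ ψ)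
    (Θ : ℝ → ℝ)
    (hΘ : ∀ t, Θ t = (∫ w in (0:ℝ)..t, xτ (ρ + w - τ)) - xτ (ρ + t - τ)) :
    StrictMonoOn ψ (Ici (0:ℝ)) ∧
    Filter.Tendsto ψ Filter.atTop Filter.atTop ∧
    (τ ≤ 1 → ψ τ < 1) ∧
    ContinuousOn Θ (Icc (0:ℝ) τ) ∧
    StrictMonoOn Θ (Icc (0:ℝ) τ) ∧
    Θ 0 * Θ τ < 0 ∧
    ∃ ξ ∈ Ioo (0:ℝ) τ, Θ ξ = 0 ∧
      (∀ t ∈ Ioo (0:ℝ) τ, Θ t = 0 → t = ξ) ∧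
      (∫ w in (0:ℝ)..ξ, xτ (ρ + w - τ)) = xτ (ρ + ξ - τ) ∧
      (∀ t ∈ Icc (0:ℝ) ξ, ψ t = ∫ w in (0:ℝ)..t, xτ (ρ + w - τ)) ∧
      (∀ t ≥ ξ, ψ t = ψ ξ * Real.exp (t - ξ)) := by
  obtain ⟨hτ1, hτ2⟩ := hτ
  have hτ0 : 0 < τ := lt_trans (by positivity) hτ1
  have hc : Continuous fun u : ℝ => xτ (u - τ) := hx.1.comp (by continuity)
  obtain ⟨hρ0, hxρ, hxpos, hρ1⟩ : 0 < ρ ∧ xτ ρ = 0 ∧ (∀ t, t < ρ → 0 < xτ t) ∧ 1 ≤ ρ := by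
    rw [hρ]; exact S5.rho_spec hx hτ1
  have hxnn : ∀ u, u ≤ ρ → 0 ≤ xτ u := by
    intro u hu
    rcases lt_or_eq_of_le hu with h | h
    · exact (hxpos u h).le
    · rw [h, hxρ]
  have hxmono : ∀ s t : ℝ, s ≤ t → t ≤ ρ → xτ t ≤ xτ s := by
    intro s t hst htρ
    rcases le_or_gt t 0 with h0 | h0
    · rw [hx.2.1 t h0, hx.2.1 s (hst.trans h0)]
    · rcases le_or_gt s 0 with h1 | h1
      · rw [hx.2.1 s h1, hx.2.2 t h0.le]
        have hnn : 0 ≤ ∫ u in (0:ℝ)..t, xτ (u - τ) :=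
          intervalIntegral.integral_nonneg h0.le fun u hu => hxnn _ (by linarith [hu.2])
        linarith
      · have hd := S5.xdiff hx h1.le hst
        have hnn : 0 ≤ ∫ u in s..t, xτ (u - τ) :=
          intervalIntegral.integral_nonneg hst fun u hu => hxnn _ (by linarith [hu.2])
        linarith
  have hxle1 : ∀ u, u ≤ ρ → xτ u ≤ 1 := by
    intro u hu
    rcases le_or_gt u 0 with h0 | h0
    · rw [hx.2.1 u h0]
    · have h1 : xτ 0 = 1 := hx.2.1 0 le_rfl
      have := hxmono 0 u h0.le hu
      linarith
  have hxlt1 : ∀ u, 0 < u → u ≤ ρ → xτ u < 1 := by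
    intro u h0 hu
    rw [hx.2.2 u h0.le]
    have hpos : 0 < ∫ s in (0:ℝ)..u, xτ (s - τ) := by
      apply intervalIntegral.intervalIntegral_pos_of_pos_on (hc.intervalIntegrable _ _) _ h0
      intro s hs
      exact hxpos _ (by linarith [hs.2])
    linarith
  -- the functions g and G
  set g : ℝ → ℝ := fun s => xτ (ρ + s - τ) with hgdef
  set G : ℝ → ℝ := fun t => ∫ s in (0:ℝ)..t, g s with hGdef
  have hgc : Continuous g := hx.1.comp (by continuity)
  have hgpos : ∀ s, s < τ → 0 < g s := fun s hs => hxpos _ (by linarith)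
  have hgpos' : ∀ s, s < τ → 0 < g s := hgpos
  have hgle : ∀ s, s ≤ τ → g s ≤ 1 := fun s hs => hxle1 _ (by linarith)
  have hganti : ∀ a b, a ≤ b → b ≤ τ → g b ≤ g a :=
    fun a b hab hb => hxmono _ _ (by linarith) (by linarith)
  have hgτ : g τ = 0 := by
    show xτ (ρ + τ - τ) = 0
    rw [show ρ + τ - τ = ρ by ring, hxρ]
  have hGd : ∀ t, HasDerivAt G (g t) t := fun t => S5.hasDerivAt_primitive hgc 0 t
  have hGc : Continuous G := continuous_iff_continuousAt.mpr fun t => (hGd t).continuousAt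
  have hGsub : ∀ a b : ℝ, G b - G a = ∫ s in a..b, g s := by
    intro a b
    have := intervalIntegral.integral_add_adjacent_intervals (a := (0:ℝ)) (b := a) (c := b)
      (f := g) (μ := volume) (hgc.intervalIntegrable _ _) (hgc.intervalIntegrable _ _)
    show (∫ s in (0:ℝ)..b, g s) - ∫ s in (0:ℝ)..a, g s = _
    linarith
  have hIpos : ∀ a b : ℝ, a < b → b ≤ τ → 0 < ∫ s in a..b, g s := by
    intro a b hab hb
    apply intervalIntegral.intervalIntegral_pos_of_pos_on (hgc.intervalIntegrable _ _) _ hab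
    intro s hs
    exact hgpos s (lt_of_lt_of_le hs.2 hb)
  -- Θ facts
  have hΘeq : ∀ t, Θ t = G t - g t := hΘ
  have hΘfun : Θ = fun t => G t - g t := funext hΘeq
  have hΘcont : Continuous Θ := by rw [hΘfun]; exact hGc.sub hgc
  have hΘc : ContinuousOn Θ (Icc (0:ℝ) τ) := hΘcont.continuousOn
  have hΘsm : StrictMonoOn Θ (Icc (0:ℝ) τ) := by
    intro a ha b hb hab
    rw [hΘeq, hΘeq]
    have h1 := hGsub a b
    have h2 := hIpos a b hab hb.2
    have h3 := hganti a b hab.le hb.2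
    linarith
  have hΘ0 : Θ 0 < 0 := by
    have hG0 : G 0 = 0 := intervalIntegral.integral_same
    have := hgpos 0 hτ0
    rw [hΘeq, hG0]
    linarith
  have hΘτ : 0 < Θ τ := by
    have h1 : G τ - G 0 = ∫ s in (0:ℝ)..τ, g s := hGsub 0 τ
    have hG0 : G 0 = 0 := intervalIntegral.integral_same
    have h2 := hIpos 0 τ hτ0 le_rfl
    rw [hΘeq, hgτ]
    linarith
  have hprod : Θ 0 * Θ τ < 0 := mul_neg_of_neg_of_pos hΘ0 hΘτ
  obtain ⟨ξ, hξmem, hΘξ⟩ : ∃ ξ ∈ Ioo (0:ℝ) τ, Θ ξ = 0 := by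
    have him := intermediate_value_Ioo hτ0.le hΘc
    obtain ⟨ξ, hξ, hΘξ⟩ := him ⟨hΘ0, hΘτ⟩
    exact ⟨ξ, hξ, hΘξ⟩
  obtain ⟨hξ0, hξτ⟩ := hξmem
  have hξIcc : ξ ∈ Icc (0:ℝ) τ := ⟨hξ0.le, hξτ.le⟩
  have huniq : ∀ t ∈ Ioo (0:ℝ) τ, Θ t = 0 → t = ξ := by
    intro t ht h0
    exact hΘsm.injOn ⟨ht.1.le, ht.2.le⟩ hξIcc (by rw [h0, hΘξ])
  have hGgξ : G ξ = g ξ := by have := hΘeq ξ; rw [hΘξ] at this; linarith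
  have hΘmono := hΘsm.monotoneOn
  have hΘle0 : ∀ s ∈ Icc (0:ℝ) ξ, G s ≤ g s := by
    intro s hs
    have h1 : Θ s ≤ Θ ξ := hΘmono ⟨hs.1, hs.2.trans hξτ.le⟩ hξIcc hs.2
    rw [hΘξ] at h1
    have := hΘeq s
    linarith
  have hΘge0 : ∀ s ∈ Icc ξ τ, g s ≤ G s := by
    intro s hs
    have h1 : Θ ξ ≤ Θ s := hΘmono hξIcc ⟨hξ0.le.trans hs.1, hs.2⟩ hs.1
    rw [hΘξ] at h1
    have := hΘeq s
    linarith
  -- ψ side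
  obtain ⟨hψc, hψ0, hψ1, hψ2⟩ := hψ
  set ψ' : ℝ → ℝ := fun t => ψ (max t 0) with hψ'def
  have hψ'c : Continuous ψ' :=
    hψc.comp_continuous (continuous_id.max continuous_const) fun t => le_max_right t 0
  have heq : ∀ t : ℝ, 0 ≤ t → ψ' t = ψ t := by
    intro t ht
    show ψ (max t 0) = ψ t
    rw [max_eq_left ht]
  set m : ℝ → ℝ := fun s => max (g s) (ψ' s) with hmdef
  have hmc : Continuous m := hgc.max hψ'c
  have hψm : ∀ t ∈ Icc (0:ℝ) τ, ψ' t = ∫ s in (0:ℝ)..t, m s := by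
    intro t ht
    rw [heq t ht.1, hψ1 t ht]
    apply intervalIntegral.integral_congr
    intro s hs
    rw [uIcc_of_le ht.1] at hs
    show max (xτ (ρ + s - τ)) (ψ s) = max (g s) (ψ' s)
    rw [heq s hs.1]
  have hGψ : ∀ t ∈ Icc (0:ℝ) τ, G t ≤ ψ' t := by
    intro t ht
    rw [hψm t ht]
    apply intervalIntegral.integral_mono_on ht.1 (hgc.intervalIntegrable _ _)
      (hmc.intervalIntegrable _ _)
    intro s _
    exact le_max_left _ _
  have hsm : ∀ a b : ℝ, 0 ≤ a → a < b → b ≤ τ → ψ' a < ψ' b := by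
    intro a b ha hab hb
    have h1 : ψ' b - ψ' a = ∫ s in a..b, m s := by
      rw [hψm a ⟨ha, by linarith⟩, hψm b ⟨by linarith, hb⟩]
      have := intervalIntegral.integral_add_adjacent_intervals (a := (0:ℝ)) (b := a) (c := b)
        (f := m) (μ := volume) (hmc.intervalIntegrable _ _) (hmc.intervalIntegrable _ _)
      linarith
    have h2 : 0 < ∫ s in a..b, g s := hIpos a b hab hb
    have h3 : (∫ s in a..b, g s) ≤ ∫ s in a..b, m s := by
      apply intervalIntegral.integral_mono_on hab.le (hgc.intervalIntegrable _ _)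
        (hmc.intervalIntegrable _ _)
      intro s _
      exact le_max_left _ _
    linarith
  -- Gronwall: ψ' = G on [0, ξ]
  set d : ℝ → ℝ := fun t => ψ' t - G t with hddef
  have hdc : Continuous d := hψ'c.sub hGc
  set f : ℝ → ℝ := fun t => ∫ s in (0:ℝ)..t, d s with hfdef
  have hfd : ∀ t, HasDerivAt f (d t) t := fun t => S5.hasDerivAt_primitive hdc 0 t
  have hfc : Continuous f := continuous_iff_continuousAt.mpr fun t => (hfd t).continuousAt
  have hdnn : ∀ t ∈ Icc (0:ℝ) τ, 0 ≤ d t := by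
    intro t ht
    have := hGψ t ht
    show 0 ≤ ψ' t - G t
    linarith
  have hdle : ∀ s ∈ Icc (0:ℝ) ξ, m s - g s ≤ d s := by
    intro s hs
    have hsτ : s ∈ Icc (0:ℝ) τ := ⟨hs.1, hs.2.trans hξτ.le⟩
    have hdpos : 0 ≤ d s := hdnn s hsτ
    rcases le_total (ψ' s) (g s) with h | h
    · have hm : m s = g s := max_eq_left h
      rw [hm]
      linarith
    · have hm : m s = ψ' s := max_eq_right h
      have hGg := hΘle0 s hs
      show m s - g s ≤ ψ' s - G s
      rw [hm]
      linarith
  have hdint : ∀ t ∈ Icc (0:ℝ) ξ, d t = ∫ s in (0:ℝ)..t, (m s - g s) := by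
    intro t ht
    have h1 : ψ' t = ∫ s in (0:ℝ)..t, m s := hψm t ⟨ht.1, ht.2.trans hξτ.le⟩
    show ψ' t - G t = _
    rw [h1, intervalIntegral.integral_sub (hmc.intervalIntegrable _ _)
      (hgc.intervalIntegrable _ _)]
  have hdf : ∀ t ∈ Icc (0:ℝ) ξ, d t ≤ f t := by
    intro t ht
    rw [hdint t ht]
    apply intervalIntegral.integral_mono_on ht.1 ((hmc.sub hgc).intervalIntegrable _ _)
      (hdc.intervalIntegrable _ _)
    intro s hs
    exact hdle s ⟨hs.1, hs.2.trans ht.2⟩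
  have hanti : AntitoneOn (fun t => f t * Real.exp (-t)) (Icc (0:ℝ) ξ) := by
    apply antitoneOn_of_deriv_nonpos (convex_Icc _ _)
    · exact (hfc.mul (Real.continuous_exp.comp continuous_neg)).continuousOn
    · intro u hu
      rw [interior_Icc] at hu
      exact (((hfd u).mul (((hasDerivAt_id u).neg).exp)).differentiableAt).differentiableWithinAt
    · intro u hu
      rw [interior_Icc] at hu
      have hD : HasDerivAt (fun t => f t * Real.exp (-t))
          (d u * Real.exp (-u) + f u * (Real.exp (-u) * (-1))) u := by
        exact (hfd u).mul (((hasDerivAt_id u).neg).exp)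
      rw [hD.deriv]
      have := hdf u ⟨hu.1.le, hu.2.le⟩
      nlinarith [Real.exp_pos (-u)]
  have hfle : ∀ t ∈ Icc (0:ℝ) ξ, f t ≤ 0 := by
    intro t ht
    have h1 : f t * Real.exp (-t) ≤ f 0 * Real.exp (-0) :=
      hanti (left_mem_Icc.mpr hξ0.le) ht ht.1
    have hf0 : f 0 = 0 := intervalIntegral.integral_same
    rw [hf0, zero_mul] at h1
    nlinarith [Real.exp_pos (-t)]
  have hψGe : ∀ t ∈ Icc (0:ℝ) ξ, ψ' t = G t := by
    intro t ht
    have h1 := hdf t ht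
    have h2 := hfle t ht
    have h3 : 0 ≤ d t := hdnn t ⟨ht.1, ht.2.trans hξτ.le⟩
    have h4 : d t = 0 := le_antisymm (h1.trans h2) h3
    have : ψ' t - G t = 0 := h4
    linarith
  have hψ'ξpos : 0 < ψ' ξ := by
    rw [hψGe ξ ⟨hξ0.le, le_rfl⟩]
    have h1 := hIpos 0 ξ hξ0 hξτ.le
    have h2 := hGsub 0 ξ
    have hG0 : G 0 = 0 := intervalIntegral.integral_same
    linarith
  -- the exponential regime
  have hmψ : ∀ s ∈ Icc ξ τ, m s = ψ' s := by
    intro s hs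
    exact max_eq_right ((hΘge0 s hs).trans (hGψ s ⟨hξ0.le.trans hs.1, hs.2⟩))
  have hcase1 : ∀ t, ξ ≤ t → t ≤ τ → ψ' t = ψ' ξ + ∫ s in ξ..t, ψ' s := by
    intro t h1 h2
    rw [hψm t ⟨hξ0.le.trans h1, h2⟩, hψm ξ ⟨hξ0.le, hξτ.le⟩]
    rw [← intervalIntegral.integral_add_adjacent_intervals (a := (0:ℝ)) (b := ξ) (c := t)
      (f := m) (μ := volume) (hmc.intervalIntegrable _ _) (hmc.intervalIntegrable _ _)]
    congr 1
    apply intervalIntegral.integral_congr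
    intro s hs
    rw [uIcc_of_le h1] at hs
    exact hmψ s ⟨hs.1, hs.2.trans h2⟩
  have hall : ∀ t, ξ ≤ t → ψ' t = ψ' ξ + ∫ s in ξ..t, ψ' s := by
    intro t ht
    rcases le_or_gt t τ with h | h
    · exact hcase1 t ht h
    · have hτt : ψ' t = ψ' τ + ∫ s in τ..t, ψ' s := by
        rw [heq t (by linarith), heq τ hτ0.le, hψ2 t h.le]
        congr 1
        apply intervalIntegral.integral_congr
        intro s hs
        rw [uIcc_of_le h.le] at hs
        exact (heq s (by linarith [hs.1])).symm
      rw [hτt, hcase1 τ hξτ.le le_rfl]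
      have := intervalIntegral.integral_add_adjacent_intervals (a := ξ) (b := τ) (c := t)
        (f := ψ') (μ := volume) (hψ'c.intervalIntegrable _ _) (hψ'c.intervalIntegrable _ _)
      linarith
  have hexp : ∀ t, ξ ≤ t → ψ' t = ψ' ξ * Real.exp (t - ξ) := by
    intro T hT
    set v : ℝ → ℝ := fun t => ψ' t * Real.exp (ξ - t) with hvdef
    have hvc : ContinuousOn v (Icc ξ T) :=
      (hψ'c.mul (Real.continuous_exp.comp (continuous_const.sub continuous_id))).continuousOn
    have hvd : ∀ u ∈ Ico ξ T, HasDerivWithinAt v 0 (Ici u) u := by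
      intro u hu
      have hI : HasDerivAt (fun t => ∫ s in ξ..t, ψ' s) (ψ' u) u :=
        S5.hasDerivAt_primitive hψ'c ξ u
      have hE : HasDerivAt (fun t : ℝ => Real.exp (ξ - t)) (Real.exp (ξ - u) * (-1)) u :=
        ((hasDerivAt_id u).const_sub ξ).exp
      have hval : ψ' ξ + ∫ s in ξ..u, ψ' s = ψ' u := (hall u hu.1).symm
      have hwd0 : HasDerivAt (fun t => (ψ' ξ + ∫ s in ξ..t, ψ' s) * Real.exp (ξ - t)) 0 u := by
        have h0 := ((hasDerivAt_const u (ψ' ξ)).add hI).mul hE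
        have hz : (0 + ψ' u) * Real.exp (ξ - u) +
            (ψ' ξ + ∫ s in ξ..u, ψ' s) * (Real.exp (ξ - u) * (-1)) = 0 := by
          rw [hval]; ring
        exact h0.congr_deriv hz
      refine (hwd0.hasDerivWithinAt).congr ?_ ?_
      · intro y hy
        show ψ' y * Real.exp (ξ - y) = _
        rw [← hall y (hu.1.trans hy)]
      · show ψ' u * Real.exp (ξ - u) = _
        rw [← hall u hu.1]
    have hconst := constant_of_has_deriv_right_zero hvc hvd T (right_mem_Icc.mpr hT)
    have hvξ : v ξ = ψ' ξ := by
      show ψ' ξ * Real.exp (ξ - ξ) = ψ' ξ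
      simp
    have hvT : ψ' T * Real.exp (ξ - T) = ψ' ξ := by
      have : v T = v ξ := hconst
      rw [hvξ] at this
      exact this
    have he : Real.exp (ξ - T) * Real.exp (T - ξ) = 1 := by
      rw [← Real.exp_add]
      simp
    calc ψ' T = ψ' T * (Real.exp (ξ - T) * Real.exp (T - ξ)) := by rw [he, mul_one]
      _ = (ψ' T * Real.exp (ξ - T)) * Real.exp (T - ξ) := by ring
      _ = ψ' ξ * Real.exp (T - ξ) := by rw [hvT]
  -- assemble
  refine ⟨?_, ?_, ?_, hΘc, hΘsm, hprod, ξ, ⟨hξ0, hξτ⟩, hΘξ, huniq, hGgξ, ?_, ?_⟩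
  · -- StrictMonoOn ψ (Ici 0)
    intro a ha b hb hab
    rw [← heq a ha, ← heq b hb]
    rcases le_or_gt b τ with h | h
    · exact hsm a b ha hab h
    · rcases le_or_gt ξ a with h2 | h2
      · rw [hexp a h2, hexp b (h2.trans hab.le)]
        have h3 : Real.exp (a - ξ) < Real.exp (b - ξ) := Real.exp_lt_exp.mpr (by linarith)
        nlinarith [hψ'ξpos]
      · have h3 : ψ' a < ψ' ξ := hsm a ξ ha h2 hξτ.le
        have h4 : ψ' ξ < ψ' b := by
          rw [hexp b (by linarith)]
          have h5 : Real.exp 0 < Real.exp (b - ξ) := Real.exp_lt_exp.mpr (by linarith)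
          rw [Real.exp_zero] at h5
          nlinarith [hψ'ξpos]
        linarith
  · -- Tendsto atTop
    have hev : (fun t => ψ' ξ * Real.exp (t - ξ)) =ᶠ[atTop] ψ := by
      filter_upwards [eventually_ge_atTop ξ, eventually_ge_atTop (0:ℝ)] with t h1 h2
      rw [← heq t h2, hexp t h1]
    refine Tendsto.congr' hev ?_
    have h1 : Tendsto (fun t : ℝ => t - ξ) atTop atTop :=
      tendsto_atTop_add_const_right _ (-ξ) tendsto_id
    exact (Real.tendsto_exp_atTop.comp h1).const_mul_atTop hψ'ξpos
  · -- τ ≤ 1 → ψ τ < 1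
    intro hτle1
    rw [← heq τ hτ0.le]
    by_contra hcon
    push_neg at hcon
    have hlt : (∫ s in (0:ℝ)..τ, m s) < ∫ s in (0:ℝ)..τ, (fun _ => ψ' τ) s := by
      apply intervalIntegral.integral_lt_integral_of_continuousOn_of_le_of_exists_lt hτ0
        hmc.continuousOn continuousOn_const
      · intro s hs
        have h1 : ψ' s ≤ ψ' τ := by
          rcases eq_or_lt_of_le hs.2 with h | h
          · rw [h]
          · exact (hsm s τ hs.1.le h le_rfl).le
        have h2 : g s ≤ 1 := hgle s hs.2
        exact max_le (h2.trans hcon) h1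
      · refine ⟨τ / 2, ⟨by linarith, by linarith⟩, ?_⟩
        have h1 : ψ' (τ / 2) < ψ' τ := hsm (τ / 2) τ (by linarith) (by linarith) le_rfl
        have h2 : g (τ / 2) < 1 := hxlt1 (ρ + τ / 2 - τ) (by linarith) (by linarith)
        exact max_lt (lt_of_lt_of_le h2 hcon) h1
    rw [← hψm τ ⟨hτ0.le, le_rfl⟩] at hlt
    simp only [intervalIntegral.integral_const, smul_eq_mul, sub_zero] at hlt
    nlinarith
  · -- ψ = G on [0, ξ]
    intro t ht
    rw [← heq t ht.1]
    exact hψGe t ht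
  · -- exp formula
    intro t ht
    rw [← heq t (hξ0.le.trans ht), ← heq ξ hξ0.le]
    exact hexp t ht
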